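/- For each 0 ≤ s ≤ q − n, the dimension over F of the space of functions SJ(n,q) → F that are restrictions of polynomials of total degree at most s equals C(n+s, s). -/

import Mathlib

open MvPolynomial

private lemma aux_eq_C_of_totalDegree_le_zero {F : Type*} [CommSemiring F] {n : ℕ}
    (p : MvPolynomial (Fin n) F) (h : p.totalDegree ≤ 0) : p = C (coeff 0 p) := by
  have h0 : p.totalDegree = 0 := Nat.le_zero.mp h
  rw [MvPolynomial.totalDegree_eq_zero_iff] at h0
  ext m
  rcases eq_or_ne m 0 with rfl | hm
  · simp
  · have hns : m ∉ p.support := by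
      intro hmem
      exact hm (Finsupp.ext fun x => h0 m hmem x)
    rw [MvPolynomial.notMem_support_iff.mp hns, MvPolynomial.coeff_C, if_neg (Ne.symm hm)]

private lemma aux_eval_evalC {F : Type*} [CommSemiring F] {n : ℕ}
    (p : MvPolynomial (Fin (n + 1)) F) (y : F) (x : Fin n → F) :
    MvPolynomial.eval x (Polynomial.eval (MvPolynomial.C y) (finSuccEquiv F n p)) =
      MvPolynomial.eval (Fin.cons y x) p := by
  rw [eval_eq_eval_mv_eval']
  induction (finSuccEquiv F n p) using Polynomial.induction_on' with
  | add f g hf hg => simp [hf, hg]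
  | monomial k a =>
      simp [Polynomial.eval_monomial, Polynomial.map_monomial, map_mul, map_pow]

private lemma aux_totalDegree_symm_le {F : Type*} [CommSemiring F] {n D : ℕ}
    (Q : Polynomial (MvPolynomial (Fin n) F))
    (h : ∀ k, Q.coeff k ≠ 0 → (Q.coeff k).totalDegree + k ≤ D) :
    ((finSuccEquiv F n).symm Q).totalDegree ≤ D := by
  set f := (finSuccEquiv F n).symm Q with hf
  have hQ : finSuccEquiv F n f = Q := (finSuccEquiv F n).apply_symm_apply Q
  rw [MvPolynomial.totalDegree]
  apply Finset.sup_le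
  intro m hm
  have hm' : coeff (Finsupp.tail m) (Q.coeff (m 0)) ≠ 0 := by
    rw [← hQ, finSuccEquiv_coeff_coeff, Finsupp.cons_tail]
    exact MvPolynomial.mem_support_iff.mp hm
  have h1 : Q.coeff (m 0) ≠ 0 := fun h0 => hm' (by simp [h0])
  have h2 : ((Finsupp.tail m).sum fun _ e => e) ≤ (Q.coeff (m 0)).totalDegree :=
    MvPolynomial.le_totalDegree (MvPolynomial.mem_support_iff.mpr hm')
  have h3 := h _ h1
  have h4 : (m.sum fun _ e => e) = m 0 + ((Finsupp.tail m).sum fun _ e => e) := by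
    rw [Finsupp.sum_fintype _ _ fun _ => rfl, Finsupp.sum_fintype _ _ fun _ => rfl,
      Fin.sum_univ_succ]
    simp [Finsupp.tail_apply]
  omega

private lemma keyA {F : Type*} [Field F] :
    ∀ (s n : ℕ) (i : ℕ → F),
      (∀ a b, a < n + s → b < n + s → i a = i b → a = b) →
      ∀ p : MvPolynomial (Fin n) F, p.totalDegree ≤ s →
        (∀ v : Fin n → ℕ, StrictMono v → (∀ j : Fin n, v j ≤ (j : ℕ) + s) →
          MvPolynomial.eval (fun j => i (v j)) p = 0) →
        p = 0 := by
  intro s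
  induction s with
  | zero =>
      intro n i _ p hdeg hvan
      have hC : p = C (coeff 0 p) := aux_eq_C_of_totalDegree_le_zero p hdeg
      have hv : MvPolynomial.eval (fun j : Fin n => i ((j : ℕ))) p = 0 := by
        apply hvan (fun j : Fin n => (j : ℕ))
        · intro a b hab
          exact hab
        · intro j; omega
      rw [hC] at hv ⊢
      rw [MvPolynomial.eval_C] at hv
      rw [hv, map_zero]
  | succ s ih =>
      intro n
      induction n with
      | zero =>
          intro i _ p hdeg hvan
          have hC : p = C (coeff 0 p) := eq_C_of_isEmpty p
          have hv := hvan Fin.elim0 (fun a => a.elim0) (fun j => j.elim0)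
          rw [hC] at hv ⊢
          rw [MvPolynomial.eval_C] at hv
          rw [hv, map_zero]
      | succ n ihn =>
          intro i hi p hdeg hvan
          set Q := finSuccEquiv F n p with hQdef
          -- substitution of x_0 := i 0 vanishes
          have hr0 : Polynomial.eval (MvPolynomial.C (i 0)) Q = 0 := by
            apply ihn (fun t => i (t + 1))
            · intro a b ha hb hab
              have := hi (a + 1) (b + 1) (by omega) (by omega) hab
              omega
            · -- degree bound for the substituted polynomial
              rw [Polynomial.eval_eq_sum, Polynomial.sum_def]
              refine (MvPolynomial.totalDegree_finset_sum _ _).trans ?_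
              apply Finset.sup_le
              intro k hk
              have h1 : (Q.coeff k).totalDegree + k ≤ s + 1 :=
                (totalDegree_coeff_finSuccEquiv_add_le p k
                  (Polynomial.mem_support_iff.mp hk)).trans hdeg
              have h2 := MvPolynomial.totalDegree_mul (Q.coeff k)
                (MvPolynomial.C (i 0) ^ k)
              have h3 := MvPolynomial.totalDegree_pow
                (MvPolynomial.C (i 0) : MvPolynomial (Fin n) F) k
              rw [MvPolynomial.totalDegree_C] at h3
              omega
            · intro v' hsm hle
              set v : Fin (n + 1) → ℕ := Fin.cons 0 (fun j => v' j + 1) with hvdef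
              have hsmv : StrictMono v := by
                intro a b hab
                rcases Fin.eq_zero_or_eq_succ b with rfl | ⟨k, rfl⟩
                · exact absurd hab (Fin.not_lt_zero a)
                · rcases Fin.eq_zero_or_eq_succ a with rfl | ⟨l, rfl⟩
                  · simp [hvdef, Fin.cons_zero, Fin.cons_succ]
                  · have hlk : l < k := by rwa [Fin.succ_lt_succ_iff] at hab
                    simp only [hvdef, Fin.cons_succ]
                    exact Nat.add_lt_add_right (hsm hlk) 1
              have hbv : ∀ j : Fin (n + 1), v j ≤ (j : ℕ) + (s + 1) := by
                intro j
                rcases Fin.eq_zero_or_eq_succ j with rfl | ⟨k, rfl⟩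
                · simp [hvdef]
                · simp only [hvdef, Fin.cons_succ, Fin.val_succ]
                  have := hle k
                  omega
              have h0 := hvan v hsmv hbv
              have hxeq : (fun j => i (v j)) =
                  Fin.cons (i 0) (fun j : Fin n => i (v' j + 1)) := by
                funext j
                rcases Fin.eq_zero_or_eq_succ j with rfl | ⟨k, rfl⟩
                · simp [hvdef]
                · simp [hvdef]
              rw [hxeq] at h0
              rw [aux_eval_evalC]
              exact h0
          -- factor out (X 0 - C (i 0))
          have hroot : (Polynomial.X - Polynomial.C (MvPolynomial.C (i 0))) ∣ Q :=
            Polynomial.dvd_iff_isRoot.mpr hr0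
          obtain ⟨g', hg'⟩ := hroot
          set g : MvPolynomial (Fin (n + 1)) F := (finSuccEquiv F n).symm g' with hgdef
          have hQb : ∀ k', Q.coeff k' ≠ 0 → (Q.coeff k').totalDegree + k' ≤ s + 1 :=
            fun k' h => (totalDegree_coeff_finSuccEquiv_add_le p k' h).trans hdeg
          have hrec : ∀ k, g'.coeff k =
              Q.coeff (k + 1) + MvPolynomial.C (i 0) * g'.coeff (k + 1) := by
            intro k
            have h1 : Q.coeff (k + 1) =
                g'.coeff k - MvPolynomial.C (i 0) * g'.coeff (k + 1) := by
              rw [hg', sub_mul, Polynomial.coeff_sub, Polynomial.coeff_X_mul,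
                Polynomial.coeff_C_mul]
            rw [h1]; ring
          have claim : ∀ j k, g'.natDegree < k + j → g'.coeff k ≠ 0 →
              (g'.coeff k).totalDegree + k ≤ s := by
            intro j
            induction j with
            | zero =>
                intro k hk hne
                exact absurd (Polynomial.coeff_eq_zero_of_natDegree_lt (by omega)) hne
            | succ j ihj =>
                intro k hk hne
                rcases eq_or_ne (g'.coeff (k + 1)) 0 with hz | hnz
                · have hQne : Q.coeff (k + 1) ≠ 0 := by
                    intro h0
                    apply hne
                    rw [hrec k, hz, mul_zero, add_zero, h0]
                  have := hQb (k + 1) hQne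
                  have hEq : g'.coeff k = Q.coeff (k + 1) := by
                    rw [hrec k, hz, mul_zero, add_zero]
                  rw [hEq]
                  omega
                · have hIH := ihj (k + 1) (by omega) hnz
                  have hadd := MvPolynomial.totalDegree_add (Q.coeff (k + 1))
                    (MvPolynomial.C (i 0) * g'.coeff (k + 1))
                  have hmul := MvPolynomial.totalDegree_mul (MvPolynomial.C (i 0))
                    (g'.coeff (k + 1))
                  rw [MvPolynomial.totalDegree_C] at hmul
                  have hQcase : (Q.coeff (k + 1)).totalDegree + k ≤ s := by
                    rcases eq_or_ne (Q.coeff (k + 1)) 0 with h0 | h0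
                    · rw [h0, MvPolynomial.totalDegree_zero]
                      omega
                    · have := hQb (k + 1) h0
                      omega
                  rw [hrec k]
                  rcases max_cases (Q.coeff (k + 1)).totalDegree
                    ((MvPolynomial.C (i 0) * g'.coeff (k + 1)).totalDegree) with
                    ⟨hm, _⟩ | ⟨hm, _⟩ <;> omega
          have hgdeg : g.totalDegree ≤ s := by
            apply aux_totalDegree_symm_le
            intro k hk
            exact claim (g'.natDegree + 1) k (by omega) hk
          have hCeq : (finSuccEquiv F n) (MvPolynomial.C (i 0)) =
              Polynomial.C (MvPolynomial.C (i 0)) := by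
            simp [finSuccEquiv_apply]
          have hfac : p = (X 0 - MvPolynomial.C (i 0)) * g := by
            apply (finSuccEquiv F n).injective
            rw [map_mul, map_sub, finSuccEquiv_X_zero, hCeq, hgdef,
              (finSuccEquiv F n).apply_symm_apply g', ← hg']
          have hgvan : ∀ w : Fin (n + 1) → ℕ, StrictMono w →
              (∀ j : Fin (n + 1), w j ≤ (j : ℕ) + s) →
              MvPolynomial.eval (fun j => i (w j + 1)) g = 0 := by
            intro w hw hwb
            have hv : StrictMono (fun j => w j + 1) :=
              fun a b h => Nat.add_lt_add_right (hw h) 1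
            have hvb : ∀ j : Fin (n + 1), w j + 1 ≤ (j : ℕ) + (s + 1) := by
              intro j
              have := hwb j
              omega
            have h0 := hvan (fun j => w j + 1) hv hvb
            rw [hfac, map_mul, map_sub, MvPolynomial.eval_X, MvPolynomial.eval_C] at h0
            have hb0 : w 0 ≤ s := by simpa using hwb 0
            have hne : i (w 0 + 1) - i 0 ≠ 0 := by
              apply sub_ne_zero.mpr
              intro h
              have := hi (w 0 + 1) 0 (by omega) (by omega) h
              omega
            exact (mul_eq_zero.mp h0).resolve_left hne
          have hg0 : g = 0 := by
            apply ih (n + 1) (fun t => i (t + 1))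
            · intro a b ha hb hab
              have := hi (a + 1) (b + 1) (by omega) (by omega) hab
              omega
            · exact hgdeg
            · intro v hsm hb
              exact hgvan v hsm hb
          rw [hfac, hg0, mul_zero]

private def auxEquiv2 (n s : ℕ) :
    {f : Fin n → ℕ // ∑ j, f j ≤ s} ≃ {f : Fin (n + 1) → ℕ // ∑ j, f j = s} where
  toFun f := ⟨Fin.cons (s - ∑ j, f.1 j) f.1, by
    rw [Fin.sum_cons]
    have := f.2
    omega⟩
  invFun g := ⟨Fin.tail g.1, by
    have h := g.2
    rw [← Fin.cons_self_tail g.1, Fin.sum_cons] at h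
    omega⟩
  left_inv f := Subtype.ext (by simp only [Fin.tail_cons])
  right_inv g := Subtype.ext (by
    show Fin.cons (s - ∑ j, Fin.tail g.1 j) (Fin.tail g.1) = g.1
    have h := g.2
    rw [← Fin.cons_self_tail g.1, Fin.sum_cons] at h
    have h2 : s - ∑ j, Fin.tail g.1 j = g.1 0 := by omega
    rw [h2, Fin.cons_self_tail])

private noncomputable def auxEquiv (n s : ℕ) :
    {d : Fin n →₀ ℕ // (d.sum fun _ e => e) ≤ s} ≃ Sym (Fin (n + 1)) s :=
  ((Finsupp.equivFunOnFinite.subtypeEquiv (fun d => by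
      rw [Finsupp.sum_fintype _ _ fun _ => rfl]
      exact Iff.rfl)).trans (auxEquiv2 n s)).trans
    (Sym.equivNatSumOfFintype (Fin (n + 1)) s).symm

theorem stmt_8 {F : Type*} [Field F] (n q : ℕ) (hn : 1 ≤ n) (hnq : n ≤ q)
    (i : Fin q → F) (hi : Function.Injective i) (s : ℕ) (hs : s ≤ q - n) :
    let SJ : Set (Fin n → F) :=
      {x | ∃ v : Fin n → Fin q, StrictMono v ∧ x = fun j => i (v j)}
    Module.finrank F (Submodule.span F
      {f : SJ → F | ∃ p : MvPolynomial (Fin n) F, p.totalDegree ≤ s ∧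
        ∀ x : SJ, f x = MvPolynomial.eval x.1 p}) = (n + s).choose s := by
  intro SJ
  have hq : n + s ≤ q := by omega
  set V := MvPolynomial.restrictTotalDegree (Fin n) F s with hV
  -- the evaluation linear map
  let L : V →ₗ[F] (SJ → F) :=
    { toFun := fun p x => MvPolynomial.eval x.1 p.1
      map_add' := by
        intro a b
        funext x
        simp
      map_smul' := by
        intro c a
        funext x
        simp [MvPolynomial.smul_eq_C_mul] }
  -- the set in question is the range of L
  have hset : {f : SJ → F | ∃ p : MvPolynomial (Fin n) F, p.totalDegree ≤ s ∧
      ∀ x : SJ, f x = MvPolynomial.eval x.1 p} = ↑(LinearMap.range L) := by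
    ext f
    simp only [Set.mem_setOf_eq, SetLike.mem_coe, LinearMap.mem_range]
    constructor
    · rintro ⟨p, hdeg, hfx⟩
      refine ⟨⟨p, (MvPolynomial.mem_restrictTotalDegree _ _ _).mpr hdeg⟩, ?_⟩
      funext x
      exact (hfx x).symm
    · rintro ⟨p, rfl⟩
      exact ⟨p.1, (MvPolynomial.mem_restrictTotalDegree _ _ _).mp p.2, fun x => rfl⟩
  -- injectivity of L via keyA
  have hker : ∀ p : V, L p = 0 → p = 0 := by
    intro p hp
    apply Subtype.ext
    set iN : ℕ → F := fun t => if h : t < q then i ⟨t, h⟩ else 0 with hiN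
    apply keyA s n iN
    · intro a b ha hb hab
      rw [hiN] at hab
      simp only [dif_pos (show a < q by omega), dif_pos (show b < q by omega)] at hab
      exact congrArg Fin.val (hi hab)
    · exact (MvPolynomial.mem_restrictTotalDegree _ _ _).mp p.2
    · intro v hsm hb
      have hvlt : ∀ j : Fin n, v j < q := by
        intro j
        have h1 := hb j
        have h2 : (j : ℕ) < n := j.isLt
        omega
      set vF : Fin n → Fin q := fun j => ⟨v j, hvlt j⟩ with hvF
      have hsmF : StrictMono vF := by
        intro a b hab
        simp only [hvF, Fin.mk_lt_mk]
        exact hsm hab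
      have hx : (fun j => i (vF j)) ∈ SJ := ⟨vF, hsmF, rfl⟩
      have h0 : L p ⟨_, hx⟩ = 0 := by rw [hp]; rfl
      have h0' : MvPolynomial.eval (fun j => i (vF j)) p.1 = 0 := h0
      have hxeq : (fun j => iN (v j)) = fun j => i (vF j) := by
        funext j
        rw [hiN]
        simp only [dif_pos (hvlt j)]
        rfl
      rw [hxeq]
      exact h0'
  have hinj : Function.Injective L :=
    LinearMap.ker_eq_bot.mp (LinearMap.ker_eq_bot'.mpr hker)
  rw [hset, Submodule.span_eq, LinearMap.finrank_range_of_inj hinj]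
  -- compute the dimension of V
  letI : Fintype {d : Fin n →₀ ℕ // (d.sum fun _ e => e) ≤ s} :=
    Fintype.ofEquiv _ (auxEquiv n s).symm
  have hbasis : Module.finrank F V =
      Fintype.card {d : Fin n →₀ ℕ // (d.sum fun _ e => e) ≤ s} :=
    Module.finrank_eq_card_basis
      (MvPolynomial.basisRestrictSupport F {d : Fin n →₀ ℕ | (d.sum fun _ e => e) ≤ s})
  rw [hbasis, Fintype.card_congr (auxEquiv n s), Sym.card_sym_eq_choose]
  congr 1
  rw [Fintype.card_fin]
  omega
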